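/- Let {A_i}_{i=1}^m be events with P(A_i) > 0 and suppose (γ_1,…,γ_m) ∈ ℝ^m satisfies ∑_{j=1}^m (P(A_i ∩ A_j)/(P(A_i)P(A_j))) γ_j = 1 for every i. Then sup over (ω_1,…,ω_m) ∈ ℝ^m of (∑_i ω_i P(A_i))² / (∑_{i,j} ω_i ω_j P(A_i ∩ A_j)) equals ∑_{i=1}^m γ_i. -/

import Mathlib

open MeasureTheory Filter Set

theorem gallot_kounias_value {Ω : Type*} [MeasurableSpace Ω] (μ : Measure Ω)
    [IsProbabilityMeasure μ] (m : ℕ) (A : Fin m → Set Ω)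
    (hA : ∀ i, MeasurableSet (A i)) (hpos : ∀ i, 0 < μ (A i))
    (γ : Fin m → ℝ)
    (hγ : ∀ i, ∑ j, (μ (A i ∩ A j)).toReal /
        ((μ (A i)).toReal * (μ (A j)).toReal) * γ j = 1) :
    sSup {x : ℝ | ∃ ω : Fin m → ℝ,
        x = (∑ i, ω i * (μ (A i)).toReal) ^ 2 /
          (∑ i, ∑ j, ω i * ω j * (μ (A i ∩ A j)).toReal)} = ∑ i, γ i := by
  classical
  set p : Fin m → ℝ := fun i => (μ (A i)).toReal with hpdef
  set S : Fin m → Fin m → ℝ := fun i j => (μ (A i ∩ A j)).toReal with hSdef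
  have hppos : ∀ i, 0 < p i := fun i =>
    ENNReal.toReal_pos (hpos i).ne' (measure_ne_top μ _)
  set g : Fin m → Ω → ℝ := fun i => (A i).indicator 1 with hgdef
  have hmul : ∀ i j (a : Ω), g i a * g j a = (A i ∩ A j).indicator (1 : Ω → ℝ) a := by
    intro i j a
    by_cases hi : a ∈ A i <;> by_cases hj : a ∈ A j <;>
      simp [hgdef, Set.indicator_apply, hi, hj]
  have hind : ∀ i j : Fin m, Integrable (fun a => g i a * g j a) μ := by
    intro i j
    have h1 : (fun a => g i a * g j a) = (A i ∩ A j).indicator (1 : Ω → ℝ) := by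
      funext a; exact hmul i j a
    rw [h1]
    exact (integrable_indicator_iff ((hA i).inter (hA j))).2
      (integrableOn_const (measure_lt_top μ _).ne)
  -- key integral representation of the quadratic form
  have key : ∀ v w : Fin m → ℝ,
      ∑ i, ∑ j, v i * w j * S i j
        = ∫ a, (∑ i, v i * g i a) * (∑ j, w j * g j a) ∂μ := by
    intro v w
    have h1 : (fun a => (∑ i, v i * g i a) * (∑ j, w j * g j a))
        = fun a => ∑ i, ∑ j, (v i * w j) * (g i a * g j a) := by
      funext a
      rw [Finset.sum_mul_sum]
      exact Finset.sum_congr rfl fun i _ => Finset.sum_congr rfl fun j _ => by ring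
    rw [h1, integral_finset_sum _
      (fun i _ => integrable_finset_sum _ fun j _ => (hind i j).const_mul _)]
    refine Finset.sum_congr rfl fun i _ => ?_
    rw [integral_finset_sum _ (fun j _ => (hind i j).const_mul _)]
    refine Finset.sum_congr rfl fun j _ => ?_
    rw [integral_const_mul]
    have h2 : ∫ a, g i a * g j a ∂μ = S i j := by
      simp_rw [hmul i j]
      exact integral_indicator_one ((hA i).inter (hA j))
    rw [h2]
  have hQnn : ∀ v : Fin m → ℝ, 0 ≤ ∑ i, ∑ j, v i * v j * S i j := by
    intro v
    rw [key]
    exact integral_nonneg fun a => mul_self_nonneg _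
  have hsymm : ∀ v w : Fin m → ℝ,
      ∑ i, ∑ j, v i * w j * S i j = ∑ i, ∑ j, w i * v j * S i j := by
    intro v w
    rw [key, key]
    congr 1
    funext a
    ring
  -- Cauchy–Schwarz for the quadratic form
  have cs : ∀ v w : Fin m → ℝ,
      (∑ i, ∑ j, v i * w j * S i j) ^ 2
        ≤ (∑ i, ∑ j, v i * v j * S i j) * (∑ i, ∑ j, w i * w j * S i j) := by
    intro v w
    have hquad : ∀ t : ℝ,
        0 ≤ (∑ i, ∑ j, w i * w j * S i j) * (t * t)
          + (2 * ∑ i, ∑ j, v i * w j * S i j) * t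
          + (∑ i, ∑ j, v i * v j * S i j) := by
      intro t
      have h0 := hQnn (fun i => v i + t * w i)
      have hexp : ∑ i, ∑ j, (v i + t * w i) * (v j + t * w j) * S i j
          = (∑ i, ∑ j, v i * v j * S i j)
            + t * (∑ i, ∑ j, v i * w j * S i j)
            + t * (∑ i, ∑ j, w i * v j * S i j)
            + (t * t) * (∑ i, ∑ j, w i * w j * S i j) := by
        simp only [Finset.mul_sum, ← Finset.sum_add_distrib]
        exact Finset.sum_congr rfl fun i _ => Finset.sum_congr rfl fun j _ => by ring
      rw [hexp, ← hsymm v w] at h0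
      linarith
    have hd := discrim_le_zero hquad
    rw [discrim] at hd
    nlinarith [hd]
  -- the solution vector
  set xi : Fin m → ℝ := fun j => γ j / p j with hxidef
  have hx : ∀ i, ∑ j, S i j * xi j = p i := by
    intro i
    have h := hγ i
    have h1 : ∀ j, S i j / (p i * p j) * γ j = (S i j * xi j) / p i := by
      intro j
      rw [hxidef]
      field_simp
    rw [show (∑ j, (μ (A i ∩ A j)).toReal /
        ((μ (A i)).toReal * (μ (A j)).toReal) * γ j)
        = ∑ j, S i j / (p i * p j) * γ j from rfl] at h
    simp_rw [h1, ← Finset.sum_div] at h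
    exact (div_eq_one_iff_eq (hppos i).ne').1 h
  have hxi_p : ∀ i, xi i * p i = γ i := fun i => div_mul_cancel₀ _ (hppos i).ne'
  have hLc : ∑ i, xi i * p i = ∑ i, γ i :=
    Finset.sum_congr rfl fun i _ => hxi_p i
  have hQxx : ∑ i, ∑ j, xi i * xi j * S i j = ∑ i, γ i := by
    rw [← hLc]
    refine Finset.sum_congr rfl fun i _ => ?_
    rw [← hx i, Finset.mul_sum]
    exact Finset.sum_congr rfl fun j _ => by ring
  have hLQ : ∀ ω : Fin m → ℝ, ∑ i, ω i * p i = ∑ i, ∑ j, ω i * xi j * S i j := by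
    intro ω
    refine Finset.sum_congr rfl fun i _ => ?_
    rw [← hx i, Finset.mul_sum]
    exact Finset.sum_congr rfl fun j _ => by ring
  have hgt : IsGreatest {x : ℝ | ∃ ω : Fin m → ℝ,
      x = (∑ i, ω i * p i) ^ 2 / (∑ i, ∑ j, ω i * ω j * S i j)} (∑ i, γ i) := by
    constructor
    · refine ⟨xi, ?_⟩
      rw [hLc, hQxx]
      rcases eq_or_ne (∑ i, γ i) 0 with h | h
      · simp [h]
      · rw [sq, mul_div_assoc, div_self h, mul_one]
    · rintro y ⟨ω, rfl⟩
      have h1 : (∑ i, ω i * p i) ^ 2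
          ≤ (∑ i, ∑ j, ω i * ω j * S i j) * (∑ i, γ i) := by
        calc (∑ i, ω i * p i) ^ 2 = (∑ i, ∑ j, ω i * xi j * S i j) ^ 2 := by rw [hLQ]
          _ ≤ (∑ i, ∑ j, ω i * ω j * S i j) * (∑ i, ∑ j, xi i * xi j * S i j) := cs ω xi
          _ = (∑ i, ∑ j, ω i * ω j * S i j) * (∑ i, γ i) := by rw [hQxx]
      have hcnn : 0 ≤ ∑ i, γ i := hQxx ▸ hQnn xi
      rcases eq_or_lt_of_le (hQnn ω) with h0 | h0
      · have h2 : (∑ i, ω i * p i) ^ 2 ≤ 0 := by rw [← h0] at h1; linarith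
        have h3 : (∑ i, ω i * p i) ^ 2 = 0 :=
          le_antisymm h2 (sq_nonneg _)
        rw [h3, zero_div]
        exact hcnn
      · rw [div_le_iff₀ h0]
        linarith
  exact hgt.csSup_eq
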